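/- arXiv:1912.05179 — 2 statements merged into one kernel-verified Lean document; each statement's English description precedes it below -/
import Mathlib

section
/- Let A be an m×n real matrix of rank r. Suppose I is a list of r distinct row indices and J is a list of r distinct column indices such that the r×r submatrix Â = A(I,J) is invertible. Then A admits the cross (skeleton) decomposition A = C Â⁻¹ R, where C = A(:,J) is the m×r matrix of the columns of A indexed by J and R = A(I,:) is the r×n matrix of the rows of A indexed by I. -/
/-- **Cross (skeleton) decomposition.**
Let `A` be an `m × n` real matrix of rank `r`.  Suppose `i : Fin r → Fin m` and
`j : Fin r → Fin n` are injective selections of `r` row indices and `r` column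
indices such that the `r × r` submatrix `Â = A(I, J) = A.submatrix i j` is
invertible.  Then `A = C * Â⁻¹ * R`, where `C = A(:, J) = A.submatrix id j`
is the `m × r` matrix of the selected columns of `A` and
`R = A(I, :) = A.submatrix i id` is the `r × n` matrix of the selected rows. -/
theorem cross_decomposition {m n r : ℕ} (A : Matrix (Fin m) (Fin n) ℝ)
    (hrank : A.rank = r)
    (i : Fin r → Fin m) (j : Fin r → Fin n)
    (hi : Function.Injective i) (hj : Function.Injective j)
    (hinv : IsUnit (A.submatrix i j)) :
    A = A.submatrix id j * (A.submatrix i j)⁻¹ * A.submatrix i id := by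
  set C : Matrix (Fin m) (Fin r) ℝ := A.submatrix id j with hC
  set Ahat : Matrix (Fin r) (Fin r) ℝ := A.submatrix i j with hAhat
  -- C = A * P
  have hCP : C = A * (1 : Matrix (Fin n) (Fin n) ℝ).submatrix id j := by
    ext s t
    simp [hC, Matrix.mul_apply, Matrix.one_apply]
  -- Ahat = Q * C
  have hAhatQ : Ahat = (1 : Matrix (Fin m) (Fin m) ℝ).submatrix i id * C := by
    ext s t
    simp [hAhat, hC, Matrix.mul_apply, Matrix.one_apply]
  -- rank C = r
  have hCr : C.rank = r := by
    apply le_antisymm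
    · rw [hCP]
      exact le_trans (Matrix.rank_mul_le_left _ _) hrank.le
    · have h1 : Ahat.rank = r := by
        simpa using Matrix.rank_of_isUnit Ahat hinv
      calc r = Ahat.rank := h1.symm
        _ ≤ C.rank := by rw [hAhatQ]; exact Matrix.rank_mul_le_right _ _
  -- range C.mulVecLin = range A.mulVecLin
  have hle : LinearMap.range C.mulVecLin ≤ LinearMap.range A.mulVecLin := by
    rw [hCP, Matrix.mulVecLin_mul]
    exact LinearMap.range_comp_le_range _ _
  have hrange : LinearMap.range C.mulVecLin = LinearMap.range A.mulVecLin := by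
    apply Submodule.eq_of_le_of_finrank_eq hle
    show Module.finrank ℝ _ = Module.finrank ℝ _
    rw [← Matrix.rank, ← Matrix.rank, hCr, hrank]
  -- each column of A is C.mulVec x for some x
  have hcol : ∀ t : Fin n, ∃ x : Fin r → ℝ, C.mulVec x = fun s => A s t := by
    intro t
    have : (fun s => A s t) ∈ LinearMap.range A.mulVecLin := by
      exact ⟨Pi.single t 1, by simp [Matrix.mulVecLin_apply]; rfl⟩
    rw [← hrange] at this
    obtain ⟨x, hx⟩ := this
    exact ⟨x, hx⟩
  choose X hX using hcol
  set W : Matrix (Fin r) (Fin n) ℝ := Matrix.of fun u t => X t u with hW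
  have hAW : A = C * W := by
    ext s t
    have := congrFun (hX t) s
    simp only [Matrix.mulVec, dotProduct] at this
    rw [← this]
    simp [Matrix.mul_apply, hW]
  -- R = Ahat * W
  have hR : A.submatrix i id = Ahat * W := by
    ext s t
    have := congrFun (hX t) (i s)
    simp only [Matrix.mulVec, dotProduct] at this
    simp only [Matrix.mul_apply, hW, hAhat, Matrix.submatrix_apply, Matrix.of_apply, id, ← this]
    rfl
  rw [hR, hAW, ← Matrix.mul_assoc, Matrix.mul_assoc C,
    Matrix.nonsing_inv_mul _ ((Matrix.isUnit_iff_isUnit_det _).mp hinv), Matrix.mul_one]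
end

section
/- For any points x₁, …, x_N in ℝ^d and any σ > 0, the N×N matrix K with entries K_{ij} = exp(−‖x_i − x_j‖/σ), where ‖·‖ is the Euclidean norm on ℝ^d, is symmetric positive semidefinite. -/
open Real MeasureTheory Set Finset

lemma gram_pow_nonneg {N d n : ℕ} (x : Fin N → EuclideanSpace ℝ (Fin d)) (w : Fin N → ℝ) :
    0 ≤ ∑ i, ∑ j, w i * w j * (inner ℝ (x i) (x j) : ℝ) ^ n := by
  have hexp : ∀ i j : Fin N, (inner ℝ (x i) (x j) : ℝ) ^ n
      = ∑ g : Fin n → Fin d, (∏ m, x i (g m)) * ∏ m, x j (g m) := by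
    intro i j
    have h1 : (inner ℝ (x i) (x j) : ℝ) = ∑ k, x i k * x j k := by
      simp [PiLp.inner_apply, RCLike.inner_apply, mul_comm]
    have h2 : (inner ℝ (x i) (x j) : ℝ) ^ n = ∏ _m : Fin n, ∑ k, x i k * x j k := by
      rw [h1, Finset.prod_const, Finset.card_univ, Fintype.card_fin]
    rw [h2, Finset.prod_univ_sum]
    simp [Finset.prod_mul_distrib]
  calc (0:ℝ) ≤ ∑ g : Fin n → Fin d, (∑ i, w i * ∏ m, x i (g m)) ^ 2 := by positivity
    _ = ∑ i, ∑ j, w i * w j * (inner ℝ (x i) (x j) : ℝ) ^ n := by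
        simp only [hexp, sq, Finset.sum_mul, Finset.mul_sum]
        rw [Finset.sum_comm]
        refine Finset.sum_congr rfl fun i _ => ?_
        rw [Finset.sum_comm]
        exact Finset.sum_congr rfl fun j _ => Finset.sum_congr rfl fun g _ => by ring

lemma real_exp_tsum (t : ℝ) : Real.exp t = ∑' n : ℕ, t ^ n / (n.factorial : ℝ) := by
  rw [Real.exp_eq_exp_ℝ, NormedSpace.exp_eq_tsum_div]

lemma gaussian_form_nonneg {N d : ℕ} (x : Fin N → EuclideanSpace ℝ (Fin d)) (v : Fin N → ℝ)
    {b : ℝ} (hb : 0 ≤ b) :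
    0 ≤ ∑ i, ∑ j, v i * v j * Real.exp (-(b * ‖x i - x j‖ ^ 2)) := by
  set w : Fin N → ℝ := fun i => v i * Real.exp (-(b * ‖x i‖ ^ 2)) with hw
  have key : ∀ i j, v i * v j * Real.exp (-(b * ‖x i - x j‖ ^ 2))
      = w i * w j * Real.exp (2 * b * inner ℝ (x i) (x j)) := by
    intro i j
    have hns : ‖x i - x j‖ ^ 2 = ‖x i‖ ^ 2 - 2 * inner ℝ (x i) (x j) + ‖x j‖ ^ 2 :=
      norm_sub_sq_real (x i) (x j)
    have h3 : (-(b * ‖x i - x j‖ ^ 2)) = -(b*‖x i‖^2) + (-(b*‖x j‖^2) + 2*b*inner ℝ (x i) (x j)) := by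
      rw [hns]; ring
    rw [hw, h3, Real.exp_add, Real.exp_add]
    ring
  simp only [key]
  have : ∑ i, ∑ j, w i * w j * Real.exp (2 * b * inner ℝ (x i) (x j))
      = ∑' n : ℕ, ∑ i, ∑ j, w i * w j * ((2*b) ^ n / ((n.factorial : ℕ) : ℝ) * (inner ℝ (x i) (x j) : ℝ) ^ n) := by
    have hsum : ∀ i j : Fin N, Summable (fun n : ℕ =>
        w i * w j * ((2*b) ^ n / ((n.factorial : ℕ) : ℝ) * (inner ℝ (x i) (x j) : ℝ) ^ n)) := by
      intro i j
      have := (Real.summable_pow_div_factorial (2*b*(inner ℝ (x i) (x j) : ℝ))).mul_left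
        (w i * w j)
      refine this.congr fun n => ?_
      rw [mul_pow]; ring
    symm
    rw [Summable.tsum_finsetSum (fun i _ => summable_sum (fun j _ => hsum i j))]
    refine Finset.sum_congr rfl fun i _ => ?_
    rw [Summable.tsum_finsetSum (fun j _ => hsum i j)]
    refine Finset.sum_congr rfl fun j _ => ?_
    rw [real_exp_tsum, ← tsum_mul_left]
    refine tsum_congr fun n => ?_
    rw [mul_pow]; ring
  rw [this]
  refine tsum_nonneg fun n => ?_
  have h1 : ∑ i, ∑ j, w i * w j * ((2*b) ^ n / ((n.factorial : ℕ) : ℝ) * (inner ℝ (x i) (x j) : ℝ) ^ n)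
      = (2*b) ^ n / ((n.factorial : ℕ) : ℝ) * ∑ i, ∑ j, w i * w j * (inner ℝ (x i) (x j) : ℝ) ^ n := by
    rw [Finset.mul_sum]
    refine Finset.sum_congr rfl fun i _ => ?_
    rw [Finset.mul_sum]
    exact Finset.sum_congr rfl fun j _ => by ring
  rw [h1]
  have h2 := gram_pow_nonneg (n := n) x w
  positivity
lemma core_integral {c : ℝ} (hc : 0 ≤ c) :
    ∫ s in Ioi (0:ℝ), Real.exp (-(s^2 + c^2/s^2)) = Real.sqrt π / 2 * Real.exp (-(2*c)) := by
  rcases eq_or_lt_of_le hc with rfl | hc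
  · simp only [ne_eq, OfNat.ofNat_ne_zero, not_false_eq_true, zero_pow, zero_div, add_zero,
      mul_zero, neg_zero, Real.exp_zero, mul_one]
    simpa using integral_gaussian_Ioi 1
  set g : ℝ → ℝ := fun s => Real.exp (-(s - c/s)^2) with hgdef
  have hmeas : MeasurableSet (Ioi (0:ℝ)) := measurableSet_Ioi
  have hgm : Measurable g :=
    Real.measurable_exp.comp
      (((measurable_id.sub (measurable_const.div measurable_id)).pow_const 2).neg)
  have hpt : ∀ s ∈ Ioi (0:ℝ), Real.exp (-(s^2 + c^2/s^2)) = Real.exp (-(2*c)) * g s := by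
    intro s hs
    rw [hgdef, ← Real.exp_add]
    congr 1
    have hs0 : s ≠ 0 := ne_of_gt hs
    field_simp
    ring
  have hg_int : IntegrableOn g (Ioi (0:ℝ)) := by
    refine Integrable.mono' (((integrable_exp_neg_mul_sq one_pos).const_mul
      (Real.exp (2*c))).restrict) hgm.aestronglyMeasurable.restrict ?_
    filter_upwards [ae_restrict_mem hmeas] with s hs
    have hs0 : s ≠ 0 := ne_of_gt hs
    have h1 : -(s - c/s)^2 = 2*c - s^2 - c^2/s^2 := by field_simp; ring
    have h2 : 0 ≤ c^2/s^2 := by positivity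
    rw [Real.norm_eq_abs, abs_of_pos (Real.exp_pos _), ← Real.exp_add]
    exact Real.exp_le_exp.2 (by nlinarith)
  -- change of variables s ↦ c/s
  have hderiv1 : ∀ s ∈ Ioi (0:ℝ), HasDerivWithinAt (fun t => c/t) (-(c/s^2)) (Ioi 0) s := by
    intro s hs
    have h := ((hasDerivAt_inv (ne_of_gt hs)).const_mul c).hasDerivWithinAt (s := Ioi (0:ℝ))
    have h2 : c * -(s^2)⁻¹ = -(c/s^2) := by field_simp
    rw [h2] at h
    exact h.congr (fun t _ => by rw [div_eq_mul_inv]) (by rw [div_eq_mul_inv])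
  have hinj1 : InjOn (fun t => c/t) (Ioi (0:ℝ)) := by
    intro a ha b hb h
    have ha' : a ≠ 0 := ne_of_gt (show (0:ℝ) < a from ha)
    have hb' : b ≠ 0 := ne_of_gt (show (0:ℝ) < b from hb)
    simp only at h
    rw [div_eq_div_iff ha' hb'] at h
    exact (mul_left_cancel₀ (ne_of_gt hc) h).symm
  have himg1 : (fun t => c/t) '' Ioi (0:ℝ) = Ioi (0:ℝ) := by
    ext t
    simp only [Set.mem_image, Set.mem_Ioi]
    constructor
    · rintro ⟨s, hs, rfl⟩; positivity
    · intro ht; exact ⟨c/t, by positivity, by field_simp⟩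
  have hcomp : ∀ s ∈ Ioi (0:ℝ), |(-(c/s^2))| • g (c/s) = (c/s^2) * g s := by
    intro s hs
    have hs0 : s ≠ 0 := ne_of_gt hs
    have h1 : |(-(c/s^2))| = c/s^2 := by
      rw [abs_neg, abs_of_pos (by positivity)]
    have hcc : c/(c/s) = s := by field_simp
    rw [smul_eq_mul, h1, hgdef]
    simp only
    rw [hcc]
    congr 1
    ring
  have hA1 : ∫ s in Ioi (0:ℝ), g s = ∫ s in Ioi (0:ℝ), (c/s^2) * g s := by
    conv_lhs => rw [← himg1]
    rw [integral_image_eq_integral_abs_deriv_smul hmeas hderiv1 hinj1 g]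
    exact setIntegral_congr_fun hmeas hcomp
  have hh_int : IntegrableOn (fun s => (c/s^2) * g s) (Ioi (0:ℝ)) := by
    have h := (integrableOn_image_iff_integrableOn_abs_deriv_smul hmeas hderiv1 hinj1 g).1
      (by rwa [himg1])
    exact (h.congr_fun hcomp hmeas)
  -- change of variables φ s = s - c/s
  set φ : ℝ → ℝ := fun s => s - c/s with hφdef
  have hderiv2 : ∀ s ∈ Ioi (0:ℝ), HasDerivWithinAt φ (1 + c/s^2) (Ioi 0) s := by
    intro s hs
    have hs0 : s ≠ 0 := ne_of_gt (show (0:ℝ) < s from hs)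
    have h := ((hasDerivAt_id s).sub
      ((hasDerivAt_inv hs0).const_mul c)).hasDerivWithinAt (s := Ioi (0:ℝ))
    have h2 : (1 : ℝ) - c * -(s^2)⁻¹ = 1 + c/s^2 := by field_simp; ring
    rw [h2] at h
    exact h.congr (fun t _ => by rw [hφdef]; simp [div_eq_mul_inv])
      (by rw [hφdef]; simp [div_eq_mul_inv])
  have hmono : StrictMonoOn φ (Ioi (0:ℝ)) := by
    intro a ha b hb hab
    have ha' : (0:ℝ) < a := ha
    have hb' : (0:ℝ) < b := hb
    have hba : c/b < c/a := div_lt_div_of_pos_left hc ha' hab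
    simp only [hφdef]
    linarith
  have himg2 : φ '' Ioi (0:ℝ) = Set.univ := by
    apply Set.eq_univ_of_forall
    intro w
    have hr : 0 < w^2 + 4*c := by nlinarith
    set r := Real.sqrt (w^2+4*c) with hrdef
    have hr2 : r^2 = w^2+4*c := Real.sq_sqrt hr.le
    have hrpos : 0 < r := Real.sqrt_pos.2 hr
    have hs : 0 < (w + r)/2 := by
      rcases le_or_gt w 0 with hw | hw
      · have : -w < r := by nlinarith
        linarith
      · linarith
    have hs0 : (w+r)/2 ≠ 0 := ne_of_gt hs
    refine ⟨(w+r)/2, hs, ?_⟩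
    have hwr : w + r ≠ 0 := by intro h; rw [h, zero_div] at hs0; exact hs0 rfl
    rw [hφdef]
    simp only
    field_simp [hwr]
    linear_combination hr2
  have h2A : Real.sqrt π = (∫ s in Ioi (0:ℝ), g s) + ∫ s in Ioi (0:ℝ), (c/s^2) * g s := by
    have hgauss : ∫ w : ℝ, Real.exp (-w^2) = Real.sqrt π := by
      have := integral_gaussian 1
      simp only [one_mul, neg_mul] at this
      rw [this, div_one]
    have huniv : ∫ w : ℝ, Real.exp (-w^2) = ∫ w in φ '' Ioi (0:ℝ), Real.exp (-w^2) := by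
      rw [himg2, Measure.restrict_univ]
    rw [← hgauss, huniv,
      integral_image_eq_integral_abs_deriv_smul hmeas hderiv2 hmono.injOn
        (fun w => Real.exp (-w^2)),
      ← integral_add hg_int hh_int]
    refine setIntegral_congr_fun hmeas fun s hs => ?_
    have hs0 : (0:ℝ) < s := hs
    have habs : |1 + c/s^2| = 1 + c/s^2 := abs_of_pos (by positivity)
    rw [smul_eq_mul, habs, hφdef, hgdef]
    simp only
    ring
  have hA : ∫ s in Ioi (0:ℝ), g s = Real.sqrt π / 2 := by
    rw [← hA1] at h2A
    linarith
  calc ∫ s in Ioi (0:ℝ), Real.exp (-(s^2 + c^2/s^2))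
      = ∫ s in Ioi (0:ℝ), Real.exp (-(2*c)) * g s := setIntegral_congr_fun hmeas hpt
    _ = Real.exp (-(2*c)) * ∫ s in Ioi (0:ℝ), g s := MeasureTheory.integral_const_mul _ _
    _ = Real.sqrt π / 2 * Real.exp (-(2*c)) := by rw [hA]; ring
lemma subordination {a : ℝ} (ha : 0 ≤ a) :
    ∫ u in Ioi (0:ℝ), Real.exp (-u - a/(4*u)) / Real.sqrt u
      = Real.sqrt π * Real.exp (-Real.sqrt a) := by
  have hmeas : MeasurableSet (Ioi (0:ℝ)) := measurableSet_Ioi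
  have himg : (fun s : ℝ => s^2) '' Ioi (0:ℝ) = Ioi (0:ℝ) := by
    ext t
    simp only [Set.mem_image, Set.mem_Ioi]
    constructor
    · rintro ⟨s, hs, rfl⟩; positivity
    · intro ht
      exact ⟨Real.sqrt t, Real.sqrt_pos.2 ht, Real.sq_sqrt ht.le⟩
  have hder : ∀ s ∈ Ioi (0:ℝ), HasDerivWithinAt (fun s : ℝ => s^2) (2*s) (Ioi 0) s := by
    intro s _
    simpa using (hasDerivAt_pow 2 s).hasDerivWithinAt (s := Ioi (0:ℝ))
  have hinj : InjOn (fun s : ℝ => s^2) (Ioi (0:ℝ)) := by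
    intro p hp q hq h
    have hp' : (0:ℝ) < p := hp
    have hq' : (0:ℝ) < q := hq
    have h' : p^2 = q^2 := h
    nlinarith
  have step : ∫ u in Ioi (0:ℝ), Real.exp (-u - a/(4*u)) / Real.sqrt u
      = ∫ s in Ioi (0:ℝ), 2 * Real.exp (-(s^2 + (Real.sqrt a / 2)^2 / s^2)) := by
    conv_lhs => rw [← himg]
    rw [integral_image_eq_integral_abs_deriv_smul hmeas hder hinj
      (fun u => Real.exp (-u - a/(4*u)) / Real.sqrt u)]
    refine setIntegral_congr_fun hmeas fun s hs => ?_
    have hs' : (0:ℝ) < s := hs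
    have h1 : Real.sqrt (s^2) = s := Real.sqrt_sq hs'.le
    have h2 : |2*s| = 2*s := abs_of_pos (by linarith)
    have h3 : (Real.sqrt a / 2)^2 = a / 4 := by
      rw [div_pow, Real.sq_sqrt ha]; norm_num
    rw [smul_eq_mul, h2, h1, h3]
    have h4 : -(s^2) - a/(4*s^2) = -(s^2 + (a/4)/s^2) := by ring
    rw [h4]
    field_simp
  rw [step, MeasureTheory.integral_const_mul, core_integral (by positivity : 0 ≤ Real.sqrt a / 2)]
  rw [show -(2*(Real.sqrt a / 2)) = -Real.sqrt a by ring]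
  ring
lemma kernel_integrable {a : ℝ} (ha : 0 ≤ a) :
    IntegrableOn (fun u => Real.exp (-u - a/(4*u)) / Real.sqrt u) (Ioi (0:ℝ)) := by
  have hG : IntegrableOn (fun u : ℝ => Real.exp (-u) * u ^ ((1:ℝ)/2 - 1)) (Ioi (0:ℝ)) :=
    Real.GammaIntegral_convergent (by norm_num)
  refine Integrable.mono' hG ?_ ?_
  · refine Measurable.aestronglyMeasurable ?_ |>.restrict
    have hm1 : Measurable fun u : ℝ => -u - a/(4*u) :=
      measurable_neg.sub (measurable_const.div (measurable_const_mul 4))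
    exact (Real.measurable_exp.comp hm1).div Real.continuous_sqrt.measurable
  · filter_upwards [ae_restrict_mem measurableSet_Ioi] with u hu
    have hu' : (0:ℝ) < u := hu
    have h1 : Real.sqrt u = u ^ ((1:ℝ)/2) := Real.sqrt_eq_rpow u
    have h3 : u ^ ((1:ℝ)/2 - 1) = (Real.sqrt u)⁻¹ := by
      rw [h1, ← Real.rpow_neg hu'.le]
      norm_num
    rw [Real.norm_eq_abs, abs_of_nonneg (by positivity), h3, div_eq_mul_inv]
    have h4 : Real.exp (-u - a/(4*u)) ≤ Real.exp (-u) := by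
      apply Real.exp_le_exp.2
      have : 0 ≤ a/(4*u) := by positivity
      linarith
    have h5 : 0 ≤ (Real.sqrt u)⁻¹ := by positivity
    exact mul_le_mul_of_nonneg_right h4 h5

/-- For any points `x 1, …, x N` in `ℝ^d` and any `σ > 0`, the `N × N` matrix `K`
with entries `K i j = exp (-‖x i - x j‖ / σ)`, where `‖·‖` is the Euclidean norm
on `ℝ^d` (modelled by `EuclideanSpace ℝ (Fin d)`), is symmetric positive
semidefinite.  (`Matrix.PosSemidef` bundles symmetry (hermitianity, i.e. symmetry
over `ℝ`) together with `0 ≤ vᵀ K v` for all `v`.) -/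
theorem exp_kernel_matrix_posSemidef (N d : ℕ) (x : Fin N → EuclideanSpace ℝ (Fin d))
    (σ : ℝ) (hσ : 0 < σ) :
    (Matrix.of fun i j : Fin N => Real.exp (-(‖x i - x j‖ / σ))).PosSemidef := by
  rw [Matrix.posSemidef_iff_dotProduct_mulVec]
  constructor
  · show _ = _
    ext i j
    simp only [Matrix.conjTranspose_apply, Matrix.of_apply, star_trivial]
    rw [norm_sub_rev]
  intro v
  have key : 0 ≤ ∑ i, ∑ j, v i * v j * Real.exp (-(‖x i - x j‖ / σ)) := by
    set a : Fin N → Fin N → ℝ := fun i j => ‖x i - x j‖^2 / σ^2 with hadef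
    have ha : ∀ i j, 0 ≤ a i j := fun i j => by positivity
    have hsqrt : ∀ i j, Real.sqrt (a i j) = ‖x i - x j‖ / σ := by
      intro i j
      rw [hadef]
      simp only
      rw [← div_pow, Real.sqrt_sq (by positivity)]
    have hrepr : ∀ i j, Real.exp (-(‖x i - x j‖ / σ))
        = (Real.sqrt π)⁻¹ * ∫ u in Ioi (0:ℝ),
            Real.exp (-u - a i j/(4*u)) / Real.sqrt u := by
      intro i j
      rw [subordination (ha i j), hsqrt i j, ← mul_assoc,
        inv_mul_cancel₀ (by positivity : Real.sqrt π ≠ 0), one_mul]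
    have hswap : ∑ i, ∑ j, v i * v j * Real.exp (-(‖x i - x j‖ / σ))
        = (Real.sqrt π)⁻¹ * ∫ u in Ioi (0:ℝ),
            ∑ i, ∑ j, v i * v j * (Real.exp (-u - a i j/(4*u)) / Real.sqrt u) := by
      rw [MeasureTheory.integral_finset_sum _ (fun i _ => ?_)]
      · rw [Finset.mul_sum]
        refine Finset.sum_congr rfl fun i _ => ?_
        rw [MeasureTheory.integral_finset_sum _ (fun j _ => ?_)]
        · rw [Finset.mul_sum]
          refine Finset.sum_congr rfl fun j _ => ?_
          rw [hrepr i j, MeasureTheory.integral_const_mul]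
          ring
        · exact ((kernel_integrable (ha i j)).const_mul _)
      · exact integrable_finset_sum _ (fun j _ => ((kernel_integrable (ha i j)).const_mul _))
    rw [hswap]
    apply mul_nonneg (by positivity)
    apply setIntegral_nonneg measurableSet_Ioi
    intro u hu
    have hu' : (0:ℝ) < u := hu
    have hform := gaussian_form_nonneg x v
      (b := 1/(4*u*σ^2)) (by positivity)
    have hptw : ∀ i j : Fin N, v i * v j * (Real.exp (-u - a i j/(4*u)) / Real.sqrt u)
        = (Real.exp (-u) / Real.sqrt u) * (v i * v j
            * Real.exp (-(1/(4*u*σ^2) * ‖x i - x j‖^2))) := by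
      intro i j
      have h1 : -u - a i j/(4*u) = -u + -(1/(4*u*σ^2) * ‖x i - x j‖^2) := by
        rw [hadef]
        simp only
        field_simp
        ring
      rw [h1, Real.exp_add]
      ring
    simp only [hptw, ← Finset.mul_sum]
    apply mul_nonneg (by positivity) hform
  have him : dotProduct (star v)
      ((Matrix.of fun i j : Fin N => Real.exp (-(‖x i - x j‖ / σ))).mulVec v)
      = ∑ i, ∑ j, v i * v j * Real.exp (-(‖x i - x j‖ / σ)) := by
    simp only [dotProduct, Matrix.mulVec, star_trivial, Matrix.of_apply, Finset.mul_sum]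
    exact Finset.sum_congr rfl fun i _ => Finset.sum_congr rfl fun j _ => by ring
  rw [him]
  exact key
end
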